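/- Let n ≥ 2 and let a₁ > a₂ > … > aₙ be real numbers. For k = 1,…,n define the Uhlenbeck functions Fₖ : ℝⁿ × ℝⁿ → ℝ by Fₖ(q, p) = qₖ² + Σ_{i ≠ k} (qₖ pᵢ − qᵢ pₖ)² / (aₖ − aᵢ). Then the functions F₁,…,Fₙ pairwise Poisson commute with respect to the canonical Poisson bracket on ℝⁿ × ℝⁿ: {Fₖ, Fₘ} = 0 identically for all k, m. (These are the first integrals of the Neumann system on the sphere.) -/

import Mathlib

open Finset

/-- The canonical Poisson bracket of two functions on `ℝⁿ × ℝⁿ` (coordinates `(x, p)`):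
`{F,G} = ∑ i, (∂F/∂xᵢ · ∂G/∂pᵢ − ∂F/∂pᵢ · ∂G/∂xᵢ)`. -/
noncomputable def poissonBracket (n : ℕ) (F G : (Fin n → ℝ) × (Fin n → ℝ) → ℝ)
    (z : (Fin n → ℝ) × (Fin n → ℝ)) : ℝ :=
  ∑ i : Fin n,
    (fderiv ℝ F z (Pi.single i 1, 0) * fderiv ℝ G z (0, Pi.single i 1) -
      fderiv ℝ F z (0, Pi.single i 1) * fderiv ℝ G z (Pi.single i 1, 0))

noncomputable def uDx (n : ℕ) (a q p : Fin n → ℝ) (k j : Fin n) : ℝ :=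
  (if k = j then 2 * q k else 0) +
    ∑ i ∈ univ.erase k, 2 * (q k * p i - q i * p k) *
      ((if k = j then p i else 0) - (if i = j then p k else 0)) / (a k - a i)

noncomputable def uDp (n : ℕ) (a q p : Fin n → ℝ) (k j : Fin n) : ℝ :=
  ∑ i ∈ univ.erase k, 2 * (q k * p i - q i * p k) *
    ((if i = j then q k else 0) - (if k = j then q i else 0)) / (a k - a i)

noncomputable abbrev uXc (n : ℕ) (i : Fin n) : (Fin n → ℝ) × (Fin n → ℝ) →L[ℝ] ℝ :=
  (ContinuousLinearMap.proj i).comp (ContinuousLinearMap.fst ℝ _ _)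
noncomputable abbrev uPc (n : ℕ) (i : Fin n) : (Fin n → ℝ) × (Fin n → ℝ) →L[ℝ] ℝ :=
  (ContinuousLinearMap.proj i).comp (ContinuousLinearMap.snd ℝ _ _)

lemma uhl_fderiv (n : ℕ) (a : Fin n → ℝ) (k : Fin n) (z : (Fin n → ℝ) × (Fin n → ℝ)) :
    ∃ L : ((Fin n → ℝ) × (Fin n → ℝ)) →L[ℝ] ℝ,
      HasFDerivAt (fun w : (Fin n → ℝ) × (Fin n → ℝ) =>
        (w.1 k)^2 + ∑ i ∈ univ.erase k, (w.1 k * w.2 i - w.1 i * w.2 k)^2 / (a k - a i)) L z ∧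
      ∀ j : Fin n,
        L (Pi.single j 1, 0) = uDx n a z.1 z.2 k j ∧
        L (0, Pi.single j 1) = uDp n a z.1 z.2 k j := by
  have hx : ∀ i, HasFDerivAt (fun w : (Fin n → ℝ) × (Fin n → ℝ) => w.1 i) (uXc n i) z :=
    fun i => (uXc n i).hasFDerivAt
  have hp : ∀ i, HasFDerivAt (fun w : (Fin n → ℝ) × (Fin n → ℝ) => w.2 i) (uPc n i) z :=
    fun i => (uPc n i).hasFDerivAt
  have H := ((hx k).fun_mul (hx k)).fun_add (HasFDerivAt.fun_sum (u := univ.erase k) fun i _ =>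
      HasFDerivAt.mul_const (𝕜 := ℝ) ((((hx k).fun_mul (hp i)).fun_sub ((hx i).fun_mul (hp k))).fun_mul
        (((hx k).fun_mul (hp i)).fun_sub ((hx i).fun_mul (hp k)))) ((a k - a i)⁻¹ : ℝ))
  simp only [← pow_two, ← div_eq_mul_inv] at H
  refine ⟨_, H, fun j => ⟨?_, ?_⟩⟩
  all_goals
    simp only [uDx, uDp, ContinuousLinearMap.add_apply, ContinuousLinearMap.sub_apply,
      ContinuousLinearMap.smul_apply, ContinuousLinearMap.sum_apply,
      ContinuousLinearMap.coe_comp', Function.comp, ContinuousLinearMap.proj_apply,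
      ContinuousLinearMap.coe_fst', ContinuousLinearMap.coe_snd', Pi.single_apply,
      Pi.zero_apply, smul_eq_mul]
  · refine congrArg₂ (· + ·) ?_ (Finset.sum_congr rfl fun i hi => ?_)
    · split_ifs <;> ring
    · split_ifs <;> ring
  · have h0 : (z.1 k * 0 + z.1 k * 0 : ℝ) = 0 := by ring
    rw [h0, zero_add]
    refine Finset.sum_congr rfl fun i hi => ?_
    split_ifs <;> ring

lemma uhl_eDx_ne (n : ℕ) (a q p : Fin n → ℝ) (k j : Fin n) (h : j ≠ k) :
    uDx n a q p k j = 2 * (q k * p j - q j * p k) * (0 - p k) / (a k - a j) := by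
  unfold uDx
  rw [if_neg (Ne.symm h), zero_add,
    Finset.sum_eq_single_of_mem j (Finset.mem_erase_of_ne_of_mem h (Finset.mem_univ j))
      (fun b _ hbj => by rw [if_neg (Ne.symm h), if_neg hbj]; ring),
    if_neg (Ne.symm h), if_pos rfl]

lemma uhl_eDx_self (n : ℕ) (a q p : Fin n → ℝ) (k : Fin n) :
    uDx n a q p k k = 2 * q k +
      ∑ i ∈ univ.erase k, 2 * (q k * p i - q i * p k) * (p i - 0) / (a k - a i) := by
  unfold uDx
  rw [if_pos rfl]
  refine congrArg₂ (· + ·) rfl (Finset.sum_congr rfl fun i hi => ?_)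
  rw [if_pos rfl, if_neg (Finset.mem_erase.mp hi).1]

lemma uhl_eDp_ne (n : ℕ) (a q p : Fin n → ℝ) (k j : Fin n) (h : j ≠ k) :
    uDp n a q p k j = 2 * (q k * p j - q j * p k) * (q k - 0) / (a k - a j) := by
  unfold uDp
  rw [Finset.sum_eq_single_of_mem j (Finset.mem_erase_of_ne_of_mem h (Finset.mem_univ j))
      (fun b _ hbj => by rw [if_neg (Ne.symm h), if_neg hbj]; ring),
    if_neg (Ne.symm h), if_pos rfl]

lemma uhl_eDp_self (n : ℕ) (a q p : Fin n → ℝ) (k : Fin n) :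
    uDp n a q p k k = ∑ i ∈ univ.erase k, 2 * (q k * p i - q i * p k) * (0 - q i) / (a k - a i) := by
  unfold uDp
  refine Finset.sum_congr rfl fun i hi => ?_
  rw [if_pos rfl, if_neg (Finset.mem_erase.mp hi).1]

lemma uhl_alg (n : ℕ) (a : Fin n → ℝ) (ha : ∀ i j : Fin n, i ≠ j → a i - a j ≠ 0)
    (q p : Fin n → ℝ) (k m : Fin n) :
    ∑ j : Fin n, (uDx n a q p k j * uDp n a q p m j - uDp n a q p k j * uDx n a q p m j) = 0 := by
  rcases eq_or_ne k m with rfl | hkm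
  · exact Finset.sum_eq_zero fun j _ => by ring
  have hmk : m ∈ univ.erase k := Finset.mem_erase_of_ne_of_mem (Ne.symm hkm) (Finset.mem_univ m)
  have hkm' : k ∈ univ.erase m := Finset.mem_erase_of_ne_of_mem hkm (Finset.mem_univ k)
  rw [← Finset.add_sum_erase _ _ (Finset.mem_univ k), ← Finset.add_sum_erase _ _ hmk]
  show _ = (0:ℝ)
  have hTk : uDx n a q p k k * uDp n a q p m k - uDp n a q p k k * uDx n a q p m k
      = 2 * q k * (2 * (q m * p k - q k * p m) * (q m - 0) / (a m - a k))
        + ∑ i ∈ univ.erase k,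
          (2 * (q k * p i - q i * p k) * (p i - 0) / (a k - a i)
              * (2 * (q m * p k - q k * p m) * (q m - 0) / (a m - a k))
           - 2 * (q k * p i - q i * p k) * (0 - q i) / (a k - a i)
              * (2 * (q m * p k - q k * p m) * (0 - p m) / (a m - a k))) := by
    rw [uhl_eDx_self, uhl_eDp_self, uhl_eDp_ne n a q p m k hkm, uhl_eDx_ne n a q p m k hkm,
      Finset.sum_sub_distrib, ← Finset.sum_mul, ← Finset.sum_mul]
    ring
  have hTm : uDx n a q p k m * uDp n a q p m m - uDp n a q p k m * uDx n a q p m m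
      = -(2 * (q k * p m - q m * p k) * (q k - 0) / (a k - a m) * (2 * q m))
        + ∑ i ∈ univ.erase m,
          (2 * (q k * p m - q m * p k) * (0 - p k) / (a k - a m)
              * (2 * (q m * p i - q i * p m) * (0 - q i) / (a m - a i))
           - 2 * (q k * p m - q m * p k) * (q k - 0) / (a k - a m)
              * (2 * (q m * p i - q i * p m) * (p i - 0) / (a m - a i))) := by
    rw [uhl_eDx_ne n a q p k m (Ne.symm hkm), uhl_eDp_self, uhl_eDp_ne n a q p k m (Ne.symm hkm),
      uhl_eDx_self, Finset.sum_sub_distrib, ← Finset.mul_sum, ← Finset.mul_sum]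
    ring
  have hsum3 : ∑ j ∈ (univ.erase k).erase m,
        (uDx n a q p k j * uDp n a q p m j - uDp n a q p k j * uDx n a q p m j)
      = ∑ j ∈ (univ.erase k).erase m,
          (2 * (q k * p j - q j * p k) * (0 - p k) / (a k - a j)
              * (2 * (q m * p j - q j * p m) * (q m - 0) / (a m - a j))
           - 2 * (q k * p j - q j * p k) * (q k - 0) / (a k - a j)
              * (2 * (q m * p j - q j * p m) * (0 - p m) / (a m - a j))) := by
    refine Finset.sum_congr rfl fun j hj => ?_
    have hjm : j ≠ m := (Finset.mem_erase.mp hj).1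
    have hjk : j ≠ k := (Finset.mem_erase.mp (Finset.mem_erase.mp hj).2).1
    rw [uhl_eDx_ne n a q p k j hjk, uhl_eDp_ne n a q p m j hjm, uhl_eDp_ne n a q p k j hjk,
      uhl_eDx_ne n a q p m j hjm]
  have hsplitk : ∑ i ∈ univ.erase k,
        (2 * (q k * p i - q i * p k) * (p i - 0) / (a k - a i)
            * (2 * (q m * p k - q k * p m) * (q m - 0) / (a m - a k))
         - 2 * (q k * p i - q i * p k) * (0 - q i) / (a k - a i)
            * (2 * (q m * p k - q k * p m) * (0 - p m) / (a m - a k)))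
      = (2 * (q k * p m - q m * p k) * (p m - 0) / (a k - a m)
            * (2 * (q m * p k - q k * p m) * (q m - 0) / (a m - a k))
         - 2 * (q k * p m - q m * p k) * (0 - q m) / (a k - a m)
            * (2 * (q m * p k - q k * p m) * (0 - p m) / (a m - a k)))
        + ∑ i ∈ (univ.erase k).erase m,
          (2 * (q k * p i - q i * p k) * (p i - 0) / (a k - a i)
              * (2 * (q m * p k - q k * p m) * (q m - 0) / (a m - a k))
           - 2 * (q k * p i - q i * p k) * (0 - q i) / (a k - a i)
              * (2 * (q m * p k - q k * p m) * (0 - p m) / (a m - a k))) :=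
    (Finset.add_sum_erase _ _ hmk).symm
  have hsplitm : ∑ i ∈ univ.erase m,
        (2 * (q k * p m - q m * p k) * (0 - p k) / (a k - a m)
            * (2 * (q m * p i - q i * p m) * (0 - q i) / (a m - a i))
         - 2 * (q k * p m - q m * p k) * (q k - 0) / (a k - a m)
            * (2 * (q m * p i - q i * p m) * (p i - 0) / (a m - a i)))
      = (2 * (q k * p m - q m * p k) * (0 - p k) / (a k - a m)
            * (2 * (q m * p k - q k * p m) * (0 - q k) / (a m - a k))
         - 2 * (q k * p m - q m * p k) * (q k - 0) / (a k - a m)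
            * (2 * (q m * p k - q k * p m) * (p k - 0) / (a m - a k)))
        + ∑ i ∈ (univ.erase k).erase m,
          (2 * (q k * p m - q m * p k) * (0 - p k) / (a k - a m)
              * (2 * (q m * p i - q i * p m) * (0 - q i) / (a m - a i))
           - 2 * (q k * p m - q m * p k) * (q k - 0) / (a k - a m)
              * (2 * (q m * p i - q i * p m) * (p i - 0) / (a m - a i))) := by
    rw [Finset.erase_right_comm]
    exact (Finset.add_sum_erase _ _ hkm').symm
  have hmk0 : a m - a k ≠ 0 := ha m k (Ne.symm hkm)
  have hkm0 : a k - a m ≠ 0 := ha k m hkm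
  have hsc : (2 * q k * (2 * (q m * p k - q k * p m) * (q m - 0) / (a m - a k))
        + (2 * (q k * p m - q m * p k) * (p m - 0) / (a k - a m)
            * (2 * (q m * p k - q k * p m) * (q m - 0) / (a m - a k))
         - 2 * (q k * p m - q m * p k) * (0 - q m) / (a k - a m)
            * (2 * (q m * p k - q k * p m) * (0 - p m) / (a m - a k))))
      + (-(2 * (q k * p m - q m * p k) * (q k - 0) / (a k - a m) * (2 * q m))
        + (2 * (q k * p m - q m * p k) * (0 - p k) / (a k - a m)
            * (2 * (q m * p k - q k * p m) * (0 - q k) / (a m - a k))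
         - 2 * (q k * p m - q m * p k) * (q k - 0) / (a k - a m)
            * (2 * (q m * p k - q k * p m) * (p k - 0) / (a m - a k)))) = 0 := by
    field_simp
    ring
  have hHV : ∑ i ∈ (univ.erase k).erase m,
        (2 * (q k * p i - q i * p k) * (p i - 0) / (a k - a i)
            * (2 * (q m * p k - q k * p m) * (q m - 0) / (a m - a k))
         - 2 * (q k * p i - q i * p k) * (0 - q i) / (a k - a i)
            * (2 * (q m * p k - q k * p m) * (0 - p m) / (a m - a k)))
      + ∑ i ∈ (univ.erase k).erase m,
        (2 * (q k * p m - q m * p k) * (0 - p k) / (a k - a m)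
            * (2 * (q m * p i - q i * p m) * (0 - q i) / (a m - a i))
         - 2 * (q k * p m - q m * p k) * (q k - 0) / (a k - a m)
            * (2 * (q m * p i - q i * p m) * (p i - 0) / (a m - a i)))
      + ∑ j ∈ (univ.erase k).erase m,
          (2 * (q k * p j - q j * p k) * (0 - p k) / (a k - a j)
              * (2 * (q m * p j - q j * p m) * (q m - 0) / (a m - a j))
           - 2 * (q k * p j - q j * p k) * (q k - 0) / (a k - a j)
              * (2 * (q m * p j - q j * p m) * (0 - p m) / (a m - a j))) = 0 := by
    rw [← Finset.sum_add_distrib, ← Finset.sum_add_distrib]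
    refine Finset.sum_eq_zero fun j hj => ?_
    have hjm : j ≠ m := (Finset.mem_erase.mp hj).1
    have hjk : j ≠ k := (Finset.mem_erase.mp (Finset.mem_erase.mp hj).2).1
    have h1 : a k - a j ≠ 0 := ha k j (Ne.symm hjk)
    have h2 : a m - a j ≠ 0 := ha m j (Ne.symm hjm)
    field_simp
    ring
  rw [hTk, hTm, hsum3, hsplitk, hsplitm]
  linarith [hsc, hHV]

/-- The Uhlenbeck integrals of the Neumann system pairwise Poisson commute on `ℝⁿ × ℝⁿ`. -/
theorem uhlenbeck_integrals_commute (n : ℕ) (hn : 2 ≤ n) (a : Fin n → ℝ)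
    (ha : StrictAnti a) (F : Fin n → (Fin n → ℝ) × (Fin n → ℝ) → ℝ)
    (hF : ∀ (k : Fin n) (q p : Fin n → ℝ),
      F k (q, p) = (q k) ^ 2 +
        ∑ i ∈ Finset.univ.erase k, (q k * p i - q i * p k) ^ 2 / (a k - a i)) :
    ∀ (k m : Fin n) (z : (Fin n → ℝ) × (Fin n → ℝ)), poissonBracket n (F k) (F m) z = 0 := by
  intro k m z
  have hFe : ∀ k' : Fin n, F k' = fun w : (Fin n → ℝ) × (Fin n → ℝ) =>
      (w.1 k')^2 + ∑ i ∈ univ.erase k', (w.1 k' * w.2 i - w.1 i * w.2 k')^2 / (a k' - a i) :=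
    fun k' => funext fun w => by rw [← hF k' w.1 w.2]
  obtain ⟨L, hL, hLj⟩ := uhl_fderiv n a k z
  obtain ⟨M, hM, hMj⟩ := uhl_fderiv n a m z
  have hfk : fderiv ℝ (F k) z = L := by rw [hFe k]; exact hL.fderiv
  have hfm : fderiv ℝ (F m) z = M := by rw [hFe m]; exact hM.fderiv
  have ha' : ∀ i j : Fin n, i ≠ j → a i - a j ≠ 0 :=
    fun i j h => sub_ne_zero.mpr fun e => h (ha.injective e)
  unfold poissonBracket
  rw [hfk, hfm]
  calc ∑ j : Fin n, (L (Pi.single j 1, 0) * M (0, Pi.single j 1)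
        - L (0, Pi.single j 1) * M (Pi.single j 1, 0))
      = ∑ j : Fin n, (uDx n a z.1 z.2 k j * uDp n a z.1 z.2 m j
          - uDp n a z.1 z.2 k j * uDx n a z.1 z.2 m j) :=
        Finset.sum_congr rfl fun j _ => by
          rw [(hLj j).1, (hLj j).2, (hMj j).1, (hMj j).2]
    _ = 0 := uhl_alg n a ha' z.1 z.2 k m
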